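/- For every integer n ≥ 1, n! = Σ_{(T,v*) ∈ 𝒜*_n} 2^{m(T,v*)}, where m(T,v*) is the number of internal vertices of T that do not lie on the path from the root to the distinguished vertex, and the sum is over all pointed André trees on n vertices. -/

import Mathlib

open scoped Classical

noncomputable section

/-- An André tree on `n` vertices, encoded by its parent map `p` on `Fin n`
(vertex `i` stands for label `i+1`): every non-root vertex points to a strictly
larger parent, the root (label `n`) is a fixed point by convention, and each
vertex has at most two children. -/
def IsAndreTree (n : ℕ) (p : Fin n → Fin n) : Prop :=
  (∀ i : Fin n, (i : ℕ) + 1 < n → (i : ℕ) < (p i : ℕ)) ∧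
  (∀ i : Fin n, ¬ (i : ℕ) + 1 < n → p i = i) ∧
  ∀ j : Fin n, (Finset.univ.filter fun i : Fin n => (i : ℕ) + 1 < n ∧ p i = j).card ≤ 2

/-- The set of André trees on `n` vertices. -/
def andreTrees (n : ℕ) : Finset (Fin n → Fin n) :=
  Finset.univ.filter (IsAndreTree n)

/-- The hook length of the vertex `v`: the number of vertices in the subtree
rooted at `v`, i.e. the number of vertices `w` having `v` as an ancestor. -/
def hookA (n : ℕ) (p : Fin n → Fin n) (v : Fin n) : ℕ :=
  (Finset.univ.filter fun w : Fin n => ∃ k < n, p^[k] w = v).card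

/-- The set of internal vertices, i.e. vertices with hook length `> 1`. -/
def internalsA (n : ℕ) (p : Fin n → Fin n) : Finset (Fin n) :=
  Finset.univ.filter fun v => 1 < hookA n p v

/-- The number of children of the vertex `v`. -/
def childCount (n : ℕ) (p : Fin n → Fin n) (v : Fin n) : ℕ :=
  (Finset.univ.filter fun i : Fin n => (i : ℕ) + 1 < n ∧ p i = v).card

/-- The set of pointed André trees on `n` vertices: an André tree together with a
distinguished vertex having at most one child. -/
def pointedAndreTrees (n : ℕ) : Finset ((Fin n → Fin n) × Fin n) :=
  (andreTrees n ×ˢ Finset.univ).filter fun x => childCount n x.1 x.2 ≤ 1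

/-- `v` lies on the path from the root to the distinguished vertex `vstar`
(endpoints included), i.e. `v` is an ancestor of `vstar` (or `vstar` itself). -/
def OnPath (n : ℕ) (p : Fin n → Fin n) (vstar v : Fin n) : Prop :=
  ∃ k < n, p^[k] vstar = v

end

noncomputable section

namespace S11

/-- weight exponent -/
def mm (n : ℕ) (p : Fin n → Fin n) (vs : Fin n) : ℕ :=
  ((internalsA n p).filter fun v => ¬ OnPath n p vs v).card

/-! ### generic lemmas about André trees on `Fin (m+1)` -/

variable {m : ℕ}

lemma fix_step {q : Fin (m+1) → Fin (m+1)} (hq : IsAndreTree (m+1) q)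
    (w : Fin (m+1)) (j : ℕ) :
    q (q^[j] w) = q^[j] w ∨ (w : ℕ) + j ≤ (q^[j] w : ℕ) := by
  induction j with
  | zero => right; simp
  | succ j ih =>
    rcases ih with h | h
    · left; rw [Function.iterate_succ_apply', h, h]
    · by_cases hx : ((q^[j] w : Fin (m+1)) : ℕ) + 1 < m + 1
      · right
        rw [Function.iterate_succ_apply']
        have := hq.1 _ hx
        omega
      · left
        rw [Function.iterate_succ_apply', hq.2.1 _ hx, hq.2.1 _ hx]

lemma fix_at {q : Fin (m+1) → Fin (m+1)} (hq : IsAndreTree (m+1) q) (w : Fin (m+1)) :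
    q (q^[m] w) = q^[m] w := by
  rcases fix_step hq w m with h | h
  · exact h
  · exact hq.2.1 _ (by omega)

lemma stab {q : Fin (m+1) → Fin (m+1)} (hq : IsAndreTree (m+1) q) {w v : Fin (m+1)}
    (h : ∃ j, q^[j] w = v) : ∃ j < m + 1, q^[j] w = v := by
  obtain ⟨j, hj⟩ := h
  by_cases hjm : j < m + 1
  · exact ⟨j, hjm, hj⟩
  · refine ⟨m, by omega, ?_⟩
    have h2 : q^[j] w = q^[m] w := by
      have h3 : j = (j - m) + m := by omega
      rw [h3, Function.iterate_add_apply]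
      exact Function.iterate_fixed (fix_at hq w) _
    rw [← h2, hj]

lemma onPath_iff {q : Fin (m+1) → Fin (m+1)} (hq : IsAndreTree (m+1) q) {w v : Fin (m+1)} :
    OnPath (m+1) q w v ↔ ∃ j, q^[j] w = v :=
  ⟨fun ⟨j, _, h⟩ => ⟨j, h⟩, fun h => stab hq h⟩

lemma onPath_self (q : Fin (m+1) → Fin (m+1)) (v : Fin (m+1)) : OnPath (m+1) q v v :=
  ⟨0, by omega, rfl⟩

lemma leaf_anc {q : Fin (m+1) → Fin (m+1)} (hq : IsAndreTree (m+1) q) {u : Fin (m+1)}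
    (hu : childCount (m+1) q u = 0) : ∀ j (w : Fin (m+1)), q^[j] w = u → w = u := by
  intro j
  induction j with
  | zero => intro w h; simpa using h
  | succ j ih =>
    intro w h
    rw [Function.iterate_succ_apply'] at h
    by_cases hlt : ((q^[j] w : Fin (m+1)) : ℕ) + 1 < m + 1
    · exfalso
      have hmem : q^[j] w ∈ Finset.univ.filter
          fun i : Fin (m+1) => (i : ℕ) + 1 < m + 1 ∧ q i = u := by
        simp only [Finset.mem_filter, Finset.mem_univ, true_and]
        exact ⟨hlt, h⟩
      have hcard : (Finset.univ.filter
          fun i : Fin (m+1) => (i : ℕ) + 1 < m + 1 ∧ q i = u).card = 0 := hu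
      rw [Finset.card_eq_zero] at hcard
      rw [hcard] at hmem
      exact absurd hmem (Finset.notMem_empty _)
    · have h2 : q^[j] w = u := by rw [← h, hq.2.1 _ hlt]
      exact ih w h2

lemma leaf_path {q : Fin (m+1) → Fin (m+1)} (hq : IsAndreTree (m+1) q) {u w : Fin (m+1)}
    (hu : childCount (m+1) q u = 0) (h : OnPath (m+1) q w u) : w = u := by
  obtain ⟨j, _, hj⟩ := h
  exact leaf_anc hq hu j w hj

lemma one_le_hook (q : Fin (m+1) → Fin (m+1)) (v : Fin (m+1)) : 1 ≤ hookA (m+1) q v := by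
  have hv : v ∈ Finset.univ.filter fun w : Fin (m+1) => ∃ k < m+1, q^[k] w = v := by
    simp only [Finset.mem_filter, Finset.mem_univ, true_and]
    exact ⟨0, by omega, rfl⟩
  exact Finset.card_pos.mpr ⟨v, hv⟩

lemma hook_leaf {q : Fin (m+1) → Fin (m+1)} (hq : IsAndreTree (m+1) q) {u : Fin (m+1)}
    (hu : childCount (m+1) q u = 0) : hookA (m+1) q u = 1 := by
  unfold hookA
  rw [Finset.card_eq_one]
  refine ⟨u, ?_⟩
  ext w
  simp only [Finset.mem_filter, Finset.mem_univ, true_and, Finset.mem_singleton]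
  constructor
  · rintro ⟨j, _, hj⟩; exact leaf_anc hq hu j w hj
  · rintro rfl; exact ⟨0, by omega, rfl⟩

lemma one_lt_hook_of_anc {q : Fin (m+1) → Fin (m+1)} {u v : Fin (m+1)}
    (h : OnPath (m+1) q u v) (hne : u ≠ v) : 1 < hookA (m+1) q v := by
  apply Finset.one_lt_card.mpr
  refine ⟨u, ?_, v, ?_, hne⟩
  · simp only [Finset.mem_filter, Finset.mem_univ, true_and]; exact h
  · simp only [Finset.mem_filter, Finset.mem_univ, true_and]; exact ⟨0, by omega, rfl⟩

lemma one_lt_hook_of_anc_cc {q : Fin (m+1) → Fin (m+1)} (hq : IsAndreTree (m+1) q)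
    {u v : Fin (m+1)} (h : OnPath (m+1) q u v) (hcc : 1 ≤ childCount (m+1) q u) :
    1 < hookA (m+1) q v := by
  by_cases hne : u = v
  · subst hne
    obtain ⟨c, hc⟩ := Finset.card_pos.mp hcc
    simp only [Finset.mem_filter, Finset.mem_univ, true_and] at hc
    apply Finset.one_lt_card.mpr
    refine ⟨c, ?_, u, ?_, ?_⟩
    · simp only [Finset.mem_filter, Finset.mem_univ, true_and]
      exact ⟨1, by omega, by simpa using hc.2⟩
    · simp only [Finset.mem_filter, Finset.mem_univ, true_and]
      exact ⟨0, by omega, rfl⟩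
    · have := hq.1 c hc.1
      rw [hc.2] at this
      intro hcu; rw [hcu] at this; omega
  · exact one_lt_hook_of_anc h hne


/-! ### bridging card/sum lemmas -/

lemma cc_eq_sum (n : ℕ) (p : Fin n → Fin n) (v : Fin n) :
    childCount n p v = ∑ i : Fin n, if ((i : ℕ) + 1 < n ∧ p i = v) then 1 else 0 :=
  Finset.card_filter _ _

lemma hook_eq_sum (n : ℕ) (p : Fin n → Fin n) (v : Fin n) :
    hookA n p v = ∑ w : Fin n, if (∃ j < n, p^[j] w = v) then 1 else 0 :=
  Finset.card_filter _ _

lemma mm_eq_sum (n : ℕ) (p : Fin n → Fin n) (vs : Fin n) :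
    mm n p vs = ∑ x : Fin n, if (1 < hookA n p x ∧ ¬ OnPath n p vs x) then 1 else 0 := by
  unfold mm internalsA
  rw [Finset.card_filter, Finset.sum_filter]
  apply Finset.sum_congr rfl
  intro x _
  by_cases h1 : 1 < hookA n p x <;> by_cases h2 : OnPath n p vs x <;> simp [h1, h2]

/-! ### insertion and deletion -/

variable {k : ℕ}

def ins (q : Fin (k+1) → Fin (k+1)) (u : Fin (k+1)) : Fin (k+2) → Fin (k+2) :=
  Fin.cases u.succ (fun i => (q i).succ)

def pre (x : Fin (k+2)) : Fin (k+1) := ⟨(x : ℕ) - 1, by have := x.isLt; omega⟩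

def del (p : Fin (k+2) → Fin (k+2)) (i : Fin (k+1)) : Fin (k+1) := pre (p i.succ)

@[simp] lemma ins_zero (q : Fin (k+1) → Fin (k+1)) (u : Fin (k+1)) :
    ins q u 0 = u.succ := rfl

@[simp] lemma ins_succ (q : Fin (k+1) → Fin (k+1)) (u : Fin (k+1)) (i : Fin (k+1)) :
    ins q u i.succ = (q i).succ := by
  simp [ins]

@[simp] lemma pre_succ (j : Fin (k+1)) : pre j.succ = j := by
  simp [pre]

lemma succ_pre {x : Fin (k+2)} (hx : 1 ≤ (x : ℕ)) : (pre x).succ = x := by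
  apply Fin.ext
  simp [pre]
  omega

lemma cc_zero (q : Fin (k+1) → Fin (k+1)) (u : Fin (k+1)) :
    childCount (k+2) (ins q u) 0 = 0 := by
  rw [cc_eq_sum, Fin.sum_univ_succ]
  simp [Fin.succ_ne_zero]

lemma cc_succ (q : Fin (k+1) → Fin (k+1)) (u v : Fin (k+1)) :
    childCount (k+2) (ins q u) v.succ = childCount (k+1) q v + (if u = v then 1 else 0) := by
  rw [cc_eq_sum, cc_eq_sum, Fin.sum_univ_succ, Nat.add_comm]
  congr 1
  · apply Finset.sum_congr rfl
    intro j _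
    apply if_congr _ rfl rfl
    constructor
    · rintro ⟨hlt, h⟩
      exact ⟨by simpa using hlt, Fin.succ_injective _ (by simpa using h)⟩
    · rintro ⟨hlt, h⟩
      exact ⟨by simpa using hlt, by simp [h]⟩
  · apply if_congr _ rfl rfl
    constructor
    · rintro ⟨-, h⟩
      exact Fin.succ_injective _ (by simpa using h)
    · rintro rfl
      exact ⟨by simp, rfl⟩

lemma isAndre_ins {q : Fin (k+1) → Fin (k+1)} {u : Fin (k+1)}
    (hq : IsAndreTree (k+1) q) (hu : childCount (k+1) q u ≤ 1) :
    IsAndreTree (k+2) (ins q u) := by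
  refine ⟨?_, ?_, ?_⟩
  · intro i hi
    induction i using Fin.cases with
    | zero => simp
    | succ j =>
      have hj : (j : ℕ) + 1 < k + 1 := by simpa using hi
      have := hq.1 j hj
      simpa using this
  · intro i hi
    induction i using Fin.cases with
    | zero => simp at hi
    | succ j =>
      have hj : ¬ ((j : ℕ) + 1 < k + 1) := by simpa using hi
      have := hq.2.1 j hj
      simp [this]
  · intro v
    show childCount (k+2) (ins q u) v ≤ 2
    induction v using Fin.cases with
    | zero => rw [cc_zero]; omega
    | succ j =>
      rw [cc_succ]
      have h22 : childCount (k+1) q j ≤ 2 := hq.2.2 j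
      by_cases huj : u = j
      · subst huj; rw [if_pos rfl]; omega
      · rw [if_neg huj]; omega

lemma ins_iter_succ (q : Fin (k+1) → Fin (k+1)) (u : Fin (k+1)) (j : ℕ) (w : Fin (k+1)) :
    (ins q u)^[j] w.succ = (q^[j] w).succ := by
  induction j generalizing w with
  | zero => simp
  | succ j ih =>
    rw [Function.iterate_succ_apply, Function.iterate_succ_apply, ins_succ, ih]

lemma ins_iter_zero (q : Fin (k+1) → Fin (k+1)) (u : Fin (k+1)) (j : ℕ) :
    (ins q u)^[j+1] 0 = (q^[j] u).succ := by
  rw [Function.iterate_succ_apply, ins_zero, ins_iter_succ]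

lemma path_ss {q : Fin (k+1) → Fin (k+1)} {u : Fin (k+1)} (hq : IsAndreTree (k+1) q)
    (w v : Fin (k+1)) :
    OnPath (k+2) (ins q u) w.succ v.succ ↔ OnPath (k+1) q w v := by
  constructor
  · rintro ⟨j, -, hj⟩
    rw [ins_iter_succ] at hj
    exact stab hq ⟨j, Fin.succ_injective _ hj⟩
  · rintro ⟨j, hjlt, hj⟩
    exact ⟨j, by omega, by rw [ins_iter_succ, hj]⟩

lemma path_s0 (q : Fin (k+1) → Fin (k+1)) (u : Fin (k+1)) (w : Fin (k+1)) :
    ¬ OnPath (k+2) (ins q u) w.succ 0 := by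
  rintro ⟨j, -, hj⟩
  rw [ins_iter_succ] at hj
  exact Fin.succ_ne_zero _ hj

lemma path_0s {q : Fin (k+1) → Fin (k+1)} {u : Fin (k+1)} (hq : IsAndreTree (k+1) q)
    (v : Fin (k+1)) :
    OnPath (k+2) (ins q u) 0 v.succ ↔ OnPath (k+1) q u v := by
  constructor
  · rintro ⟨j, -, hj⟩
    match j with
    | 0 => exact absurd hj.symm (Fin.succ_ne_zero _)
    | j+1 =>
      rw [ins_iter_zero] at hj
      exact stab hq ⟨j, Fin.succ_injective _ hj⟩
  · rintro ⟨j, hjlt, hj⟩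
    exact ⟨j+1, by omega, by rw [ins_iter_zero, hj]⟩

lemma path_00 (q : Fin (k+1) → Fin (k+1)) (u : Fin (k+1)) :
    OnPath (k+2) (ins q u) 0 0 := ⟨0, by omega, rfl⟩

lemma hook_ins_zero (q : Fin (k+1) → Fin (k+1)) (u : Fin (k+1)) :
    hookA (k+2) (ins q u) 0 = 1 := by
  rw [hook_eq_sum, Fin.sum_univ_succ]
  have h0 : ∃ j < k + 2, (ins q u)^[j] (0 : Fin (k+2)) = 0 := ⟨0, by omega, rfl⟩
  rw [if_pos h0]
  have h1 : ∀ w : Fin (k+1),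
      (if (∃ j < k + 2, (ins q u)^[j] w.succ = 0) then 1 else 0) = 0 := by
    intro w
    rw [if_neg]
    rintro ⟨j, -, hj⟩
    rw [ins_iter_succ] at hj
    exact Fin.succ_ne_zero _ hj
  rw [Finset.sum_congr rfl fun w _ => h1 w]
  simp

lemma hook_ins_succ {q : Fin (k+1) → Fin (k+1)} {u : Fin (k+1)} (hq : IsAndreTree (k+1) q)
    (v : Fin (k+1)) :
    hookA (k+2) (ins q u) v.succ
      = (if OnPath (k+1) q u v then 1 else 0) + hookA (k+1) q v := by
  rw [hook_eq_sum, hook_eq_sum, Fin.sum_univ_succ]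
  congr 1
  · apply if_congr _ rfl rfl
    constructor
    · rintro ⟨j, -, hj⟩
      match j with
      | 0 => exact absurd hj.symm (Fin.succ_ne_zero _)
      | j+1 =>
        rw [ins_iter_zero] at hj
        exact stab hq ⟨j, Fin.succ_injective _ hj⟩
    · rintro ⟨j, hjlt, hj⟩
      exact ⟨j+1, by omega, by rw [ins_iter_zero, hj]⟩
  · apply Finset.sum_congr rfl
    intro w _
    apply if_congr _ rfl rfl
    constructor
    · rintro ⟨j, -, hj⟩
      rw [ins_iter_succ] at hj
      exact stab hq ⟨j, Fin.succ_injective _ hj⟩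
    · rintro ⟨j, hjlt, hj⟩
      exact ⟨j, by omega, by rw [ins_iter_succ, hj]⟩


/-! ### behaviour of the weight under insertion -/

lemma hook_cond {q : Fin (k+1) → Fin (k+1)} {u : Fin (k+1)} (hq : IsAndreTree (k+1) q)
    (v : Fin (k+1)) :
    1 < hookA (k+2) (ins q u) v.succ
      ↔ (1 < hookA (k+1) q v ∨ OnPath (k+1) q u v) := by
  rw [hook_ins_succ hq]
  have h1 := one_le_hook q v
  by_cases hP : OnPath (k+1) q u v
  · rw [if_pos hP]
    exact ⟨fun _ => Or.inr hP, fun _ => by omega⟩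
  · rw [if_neg hP, Nat.zero_add]
    exact ⟨Or.inl, fun h => h.elim id (fun h' => absurd h' hP)⟩

lemma first_term_zero (q : Fin (k+1) → Fin (k+1)) (u : Fin (k+1)) (vs : Fin (k+2)) :
    (if (1 < hookA (k+2) (ins q u) 0 ∧ ¬ OnPath (k+2) (ins q u) vs 0) then 1 else 0) = 0 := by
  rw [if_neg]
  rintro ⟨h, -⟩
  rw [hook_ins_zero] at h
  omega

lemma mm_ins_zero {q : Fin (k+1) → Fin (k+1)} {u : Fin (k+1)} (hq : IsAndreTree (k+1) q) :
    mm (k+2) (ins q u) 0 = mm (k+1) q u := by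
  rw [mm_eq_sum, mm_eq_sum, Fin.sum_univ_succ, first_term_zero, Nat.zero_add]
  apply Finset.sum_congr rfl
  intro v _
  apply if_congr _ rfl rfl
  rw [hook_cond hq, path_0s hq]
  constructor
  · rintro ⟨h1 | h1, h2⟩
    · exact ⟨h1, h2⟩
    · exact absurd h1 h2
  · rintro ⟨h1, h2⟩
    exact ⟨Or.inl h1, h2⟩

lemma mm_ins_succ_int {q : Fin (k+1) → Fin (k+1)} {u : Fin (k+1)} (hq : IsAndreTree (k+1) q)
    (hcc : 1 ≤ childCount (k+1) q u) (w : Fin (k+1)) :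
    mm (k+2) (ins q u) w.succ = mm (k+1) q w := by
  rw [mm_eq_sum, mm_eq_sum, Fin.sum_univ_succ, first_term_zero, Nat.zero_add]
  apply Finset.sum_congr rfl
  intro v _
  apply if_congr _ rfl rfl
  rw [hook_cond hq, path_ss hq]
  have himp : OnPath (k+1) q u v → 1 < hookA (k+1) q v :=
    fun hP => one_lt_hook_of_anc_cc hq hP hcc
  constructor
  · rintro ⟨h1 | h1, h2⟩
    · exact ⟨h1, h2⟩
    · exact ⟨himp h1, h2⟩
  · rintro ⟨h1, h2⟩
    exact ⟨Or.inl h1, h2⟩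

lemma mm_ins_succ_leaf {q : Fin (k+1) → Fin (k+1)} {u : Fin (k+1)} (hq : IsAndreTree (k+1) q)
    (hcc : childCount (k+1) q u = 0) (w : Fin (k+1)) :
    mm (k+2) (ins q u) w.succ
      = mm (k+1) q w + (if OnPath (k+1) q w u then 0 else 1) := by
  rw [mm_eq_sum, mm_eq_sum, Fin.sum_univ_succ, first_term_zero, Nat.zero_add]
  have hl : hookA (k+1) q u = 1 := hook_leaf hq hcc
  have key : ∀ v : Fin (k+1),
      (if (1 < hookA (k+2) (ins q u) v.succ
            ∧ ¬ OnPath (k+2) (ins q u) w.succ v.succ) then 1 else 0)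
        = (if (1 < hookA (k+1) q v ∧ ¬ OnPath (k+1) q w v) then 1 else 0)
          + (if (v = u ∧ ¬ OnPath (k+1) q w u) then 1 else 0) := by
    intro v
    have e1 : (if (1 < hookA (k+2) (ins q u) v.succ
            ∧ ¬ OnPath (k+2) (ins q u) w.succ v.succ) then 1 else 0)
        = (if ((1 < hookA (k+1) q v ∨ OnPath (k+1) q u v)
            ∧ ¬ OnPath (k+1) q w v) then (1:ℕ) else 0) :=
      if_congr (by rw [hook_cond hq, path_ss hq]) rfl rfl
    rw [e1]
    by_cases hv : v = u
    · subst hv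
      by_cases hw : OnPath (k+1) q w v
      · simp [hw]
      · have h1 : ¬ (1 < hookA (k+1) q v) := by rw [hl]; omega
        simp [hw, h1, onPath_self q v]
    · have hpu : OnPath (k+1) q u v → 1 < hookA (k+1) q v :=
        fun h => one_lt_hook_of_anc h (fun e => hv e.symm)
      have e2 : (1 < hookA (k+1) q v ∨ OnPath (k+1) q u v) ↔ 1 < hookA (k+1) q v :=
        ⟨fun h => h.elim id hpu, Or.inl⟩
      simp [e2, hv]
  rw [Finset.sum_congr rfl fun v _ => key v, Finset.sum_add_distrib]
  congr 1
  by_cases hw : OnPath (k+1) q w u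
  · simp [hw]
  · simp [hw, Finset.sum_ite_eq']


/-! ### deletion -/

lemma p_zero_pos {p : Fin (k+2) → Fin (k+2)} (hp : IsAndreTree (k+2) p) :
    1 ≤ (p 0 : ℕ) := by
  have h := hp.1 0 (by simp)
  omega

lemma p_succ_pos {p : Fin (k+2) → Fin (k+2)} (hp : IsAndreTree (k+2) p) (i : Fin (k+1)) :
    1 ≤ (p i.succ : ℕ) := by
  by_cases h : ((i.succ : Fin (k+2)) : ℕ) + 1 < k + 2
  · have := hp.1 i.succ h
    omega
  · rw [hp.2.1 _ h]
    simp

lemma ins_del {p : Fin (k+2) → Fin (k+2)} (hp : IsAndreTree (k+2) p) :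
    ins (del p) (pre (p 0)) = p := by
  funext i
  induction i using Fin.cases with
  | zero => rw [ins_zero]; exact succ_pre (p_zero_pos hp)
  | succ j => rw [ins_succ]; exact succ_pre (p_succ_pos hp j)

lemma del_ins (q : Fin (k+1) → Fin (k+1)) (u : Fin (k+1)) :
    del (ins q u) = q := by
  funext i
  show pre ((ins q u) i.succ) = q i
  rw [ins_succ, pre_succ]

lemma cc_del {p : Fin (k+2) → Fin (k+2)} (hp : IsAndreTree (k+2) p) (j : Fin (k+1)) :
    childCount (k+2) p j.succ
      = childCount (k+1) (del p) j + (if p 0 = j.succ then 1 else 0) := by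
  have h := cc_succ (del p) (pre (p 0)) j
  rw [ins_del hp] at h
  rw [h]
  congr 1
  apply if_congr _ rfl rfl
  constructor
  · intro h'
    rw [← succ_pre (p_zero_pos hp), h']
  · intro h'
    rw [h', pre_succ]

lemma isAndre_del {p : Fin (k+2) → Fin (k+2)} (hp : IsAndreTree (k+2) p) :
    IsAndreTree (k+1) (del p) := by
  refine ⟨?_, ?_, ?_⟩
  · intro i hi
    have hsl : ((i.succ : Fin (k+2)) : ℕ) + 1 < k + 2 := by simp; omega
    have h1 := hp.1 i.succ hsl
    have h2 : ((del p i : Fin (k+1)) : ℕ) = (p i.succ : ℕ) - 1 := rfl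
    simp only [Fin.val_succ] at h1
    omega
  · intro i hi
    have hs : ¬ (((i.succ : Fin (k+2)) : ℕ) + 1 < k + 2) := by simp; omega
    have h1 := hp.2.1 _ hs
    show pre (p i.succ) = i
    rw [h1, pre_succ]
  · intro j
    show childCount (k+1) (del p) j ≤ 2
    have h2 : childCount (k+2) p j.succ ≤ 2 := hp.2.2 j.succ
    rw [cc_del hp] at h2
    by_cases h : p 0 = j.succ
    · rw [if_pos h] at h2; omega
    · rw [if_neg h] at h2; omega

lemma cc_del_point {p : Fin (k+2) → Fin (k+2)} (hp : IsAndreTree (k+2) p) :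
    childCount (k+1) (del p) (pre (p 0)) ≤ 1 := by
  have h0 : p 0 = (pre (p 0)).succ := (succ_pre (p_zero_pos hp)).symm
  have h2 : childCount (k+2) p (p 0) ≤ 2 := hp.2.2 (p 0)
  rw [h0, cc_del hp, if_pos h0] at h2
  omega

lemma mem_pAT {n : ℕ} (x : (Fin n → Fin n) × Fin n) :
    x ∈ pointedAndreTrees n ↔ IsAndreTree n x.1 ∧ childCount n x.1 x.2 ≤ 1 := by
  unfold pointedAndreTrees andreTrees
  simp [Finset.mem_filter, Finset.mem_product]

lemma fiber_eq {q : Fin (k+1) → Fin (k+1)} {u : Fin (k+1)}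
    (hq : IsAndreTree (k+1) q) (hu : childCount (k+1) q u ≤ 1) :
    (pointedAndreTrees (k+2)).filter
        (fun x => (del x.1, pre (x.1 0)) = (q, u))
      = (Finset.univ.filter fun v : Fin (k+2) =>
          childCount (k+2) (ins q u) v ≤ 1).image (fun v => (ins q u, v)) := by
  ext x
  simp only [Finset.mem_filter, Finset.mem_image, Finset.mem_univ, true_and,
    mem_pAT, Prod.ext_iff]
  constructor
  · rintro ⟨⟨hand, hcc⟩, hdel, hpre⟩
    have hx1 : x.1 = ins q u := by
      rw [← hdel, ← hpre]
      exact (ins_del hand).symm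
    exact ⟨x.2, by rw [← hx1]; exact hcc, hx1.symm, rfl⟩
  · rintro ⟨v, hv, h1, h2⟩
    rw [← h1, ← h2]
    exact ⟨⟨isAndre_ins hq hu, hv⟩, by rw [del_ins], by rw [ins_zero, pre_succ]⟩


/-! ### the value of a fiber -/

lemma fiber_val {q : Fin (k+1) → Fin (k+1)} {u : Fin (k+1)}
    (hq : IsAndreTree (k+1) q) (hu : childCount (k+1) q u ≤ 1) :
    ∑ v ∈ Finset.univ.filter (fun v : Fin (k+2) =>
        childCount (k+2) (ins q u) v ≤ 1), 2 ^ mm (k+2) (ins q u) v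
      = (2 - childCount (k+1) q u)
          * ∑ w ∈ Finset.univ.filter (fun w : Fin (k+1) =>
              childCount (k+1) q w ≤ 1), 2 ^ mm (k+1) q w := by
  rw [Finset.sum_filter, Finset.sum_filter, Fin.sum_univ_succ, cc_zero,
    mm_ins_zero hq, if_pos (by omega : (0:ℕ) ≤ 1)]
  set f : Fin (k+1) → ℕ := fun w => if childCount (k+1) q w ≤ 1 then 2 ^ mm (k+1) q w else 0
    with hf
  have hfu : f u = 2 ^ mm (k+1) q u := by rw [hf]; simp only [if_pos hu]
  have hsplit : ∑ w : Fin (k+1), f w = f u + ∑ w ∈ Finset.univ.erase u, f w :=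
    (Finset.add_sum_erase _ f (Finset.mem_univ u)).symm
  have hc : childCount (k+1) q u = 0 ∨ childCount (k+1) q u = 1 := by omega
  rcases hc with hc | hc
  · -- u is a leaf
    have key : ∀ w : Fin (k+1),
        (if childCount (k+2) (ins q u) w.succ ≤ 1
          then 2 ^ mm (k+2) (ins q u) w.succ else 0)
        = (if w = u then 2 ^ mm (k+1) q u else 2 * f w) := by
      intro w
      rw [cc_succ, mm_ins_succ_leaf hq hc]
      by_cases hw : w = u
      · rw [hw]
        have e1 : (if u = u then (1:ℕ) else 0) = 1 := if_pos rfl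
        rw [e1, if_pos (onPath_self q u),
          if_pos (show childCount (k+1) q u + 1 ≤ 1 by omega),
          if_pos (rfl : u = u)]
        try simp
      · have huw : u ≠ w := fun h => hw h.symm
        have hnp : ¬ OnPath (k+1) q w u := fun h => hw (leaf_path hq hc h)
        rw [if_neg huw, Nat.add_zero, if_neg hnp, if_neg hw]
        simp only [hf]
        by_cases hcw : childCount (k+1) q w ≤ 1
        · rw [if_pos hcw, if_pos hcw, pow_succ, Nat.mul_comm]
        · rw [if_neg hcw, if_neg hcw, Nat.mul_zero]
    rw [Finset.sum_congr rfl fun w _ => key w]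
    rw [← Finset.add_sum_erase _ _ (Finset.mem_univ u), if_pos rfl]
    have herase : ∀ w ∈ Finset.univ.erase u,
        (if w = u then 2 ^ mm (k+1) q u else 2 * f w) = 2 * f w := by
      intro w hw
      rw [if_neg (Finset.ne_of_mem_erase hw)]
    rw [Finset.sum_congr rfl herase, ← Finset.mul_sum, hc, hsplit, hfu]
    ring
  · -- u has one child
    have key : ∀ w : Fin (k+1),
        (if childCount (k+2) (ins q u) w.succ ≤ 1
          then 2 ^ mm (k+2) (ins q u) w.succ else 0)
        = (if w = u then 0 else f w) := by
      intro w
      rw [cc_succ, mm_ins_succ_int hq (by omega)]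
      by_cases hw : w = u
      · rw [hw]
        have e1 : (if u = u then (1:ℕ) else 0) = 1 := if_pos rfl
        rw [e1, if_neg (show ¬ (childCount (k+1) q u + 1 ≤ 1) by omega)]
        try simp
      · have huw : u ≠ w := fun h => hw h.symm
        rw [if_neg huw, Nat.add_zero, if_neg hw]
        try simp only [hf]
    rw [Finset.sum_congr rfl fun w _ => key w]
    rw [← Finset.add_sum_erase _ _ (Finset.mem_univ u), if_pos rfl]
    have herase : ∀ w ∈ Finset.univ.erase u,
        (if w = u then 0 else f w) = f w := by
      intro w hw
      rw [if_neg (Finset.ne_of_mem_erase hw)]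
    rw [Finset.sum_congr rfl herase, hc, hsplit, hfu]
    ring


/-! ### counting: `∑ (2 - cc) = k + 2` -/

lemma sum_cc {q : Fin (k+1) → Fin (k+1)} (hq : IsAndreTree (k+1) q) :
    ∑ u : Fin (k+1), childCount (k+1) q u = k := by
  have h1 : ∀ u : Fin (k+1), childCount (k+1) q u
      = ∑ i : Fin (k+1), if ((i : ℕ) + 1 < k + 1 ∧ q i = u) then 1 else 0 :=
    fun u => cc_eq_sum _ _ _
  rw [Finset.sum_congr rfl fun u _ => h1 u, Finset.sum_comm]
  have h2 : ∀ i : Fin (k+1),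
      (∑ u : Fin (k+1), if ((i : ℕ) + 1 < k + 1 ∧ q i = u) then (1:ℕ) else 0)
        = if (i : ℕ) + 1 < k + 1 then 1 else 0 := by
    intro i
    by_cases hP : (i : ℕ) + 1 < k + 1
    · simp [hP, Finset.sum_ite_eq]
    · simp [hP]
  rw [Finset.sum_congr rfl fun i _ => h2 i]
  rw [Fin.sum_univ_castSucc]
  have h3 : ∀ i : Fin k,
      (if ((i.castSucc : Fin (k+1)) : ℕ) + 1 < k + 1 then (1:ℕ) else 0) = 1 := by
    intro i
    apply if_pos
    have := i.isLt
    simp only [Fin.coe_castSucc]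
    omega
  rw [Finset.sum_congr rfl fun i _ => h3 i, if_neg (by simp)]
  simp

lemma sum_two_sub_cc {q : Fin (k+1) → Fin (k+1)} (hq : IsAndreTree (k+1) q) :
    ∑ u : Fin (k+1), (2 - childCount (k+1) q u) = k + 2 := by
  have h1 := sum_cc hq
  have h2 : ∀ u : Fin (k+1), childCount (k+1) q u ≤ 2 := hq.2.2
  have h3 : ∑ u : Fin (k+1), ((2 - childCount (k+1) q u) + childCount (k+1) q u)
      = ∑ _u : Fin (k+1), 2 :=
    Finset.sum_congr rfl fun u _ => by have := h2 u; omega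
  rw [Finset.sum_add_distrib] at h3
  have h4 : ∑ _u : Fin (k+1), (2:ℕ) = 2 * (k+1) := by
    simp [Finset.sum_const, Finset.card_univ, Nat.mul_comm]
  omega

/-! ### grouping the sum over pointed trees -/

lemma sum_pAT {n : ℕ} (g : (Fin n → Fin n) × Fin n → ℕ) :
    ∑ z ∈ pointedAndreTrees n, g z
      = ∑ q ∈ andreTrees n,
          ∑ u ∈ Finset.univ.filter (fun u => childCount n q u ≤ 1), g (q, u) := by
  unfold pointedAndreTrees
  rw [Finset.sum_filter, Finset.sum_product]
  apply Finset.sum_congr rfl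
  intro q _
  exact (Finset.sum_filter _ _).symm

/-! ### the induction step -/

lemma step (kk : ℕ) :
    ∑ x ∈ pointedAndreTrees (kk+2), 2 ^ mm (kk+2) x.1 x.2
      = (kk+2) * ∑ x ∈ pointedAndreTrees (kk+1), 2 ^ mm (kk+1) x.1 x.2 := by
  have hmaps : ∀ x ∈ pointedAndreTrees (kk+2),
      (del x.1, pre (x.1 0)) ∈ pointedAndreTrees (kk+1) := by
    intro x hx
    rw [mem_pAT] at hx ⊢
    exact ⟨isAndre_del hx.1, cc_del_point hx.1⟩
  rw [← Finset.sum_fiberwise_of_maps_to hmaps (fun x => 2 ^ mm (kk+2) x.1 x.2)]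
  have hz : ∀ z ∈ pointedAndreTrees (kk+1),
      (∑ x ∈ (pointedAndreTrees (kk+2)).filter
          (fun x => (del x.1, pre (x.1 0)) = z), 2 ^ mm (kk+2) x.1 x.2)
        = (2 - childCount (kk+1) z.1 z.2) *
            ∑ w ∈ Finset.univ.filter (fun w => childCount (kk+1) z.1 w ≤ 1),
              2 ^ mm (kk+1) z.1 w := by
    intro z hzz
    obtain ⟨q, u⟩ := z
    rw [mem_pAT] at hzz
    obtain ⟨hq, hu⟩ := hzz
    rw [fiber_eq hq hu, Finset.sum_image
      (fun a _ b _ h => congrArg Prod.snd h)]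
    exact fiber_val hq hu
  rw [Finset.sum_congr rfl hz]
  rw [sum_pAT (fun z => (2 - childCount (kk+1) z.1 z.2) *
      ∑ w ∈ Finset.univ.filter (fun w => childCount (kk+1) z.1 w ≤ 1),
        2 ^ mm (kk+1) z.1 w)]
  rw [sum_pAT (fun z => 2 ^ mm (kk+1) z.1 z.2), Finset.mul_sum]
  apply Finset.sum_congr rfl
  intro q hqmem
  have hqa : IsAndreTree (kk+1) q := by
    unfold andreTrees at hqmem
    simpa using hqmem
  dsimp only
  show ∑ u ∈ _, (2 - childCount (kk+1) q u) * (∑ w ∈ Finset.univ.filter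
    (fun w => childCount (kk+1) q w ≤ 1), 2 ^ mm (kk+1) q w) = _
  rw [← Finset.sum_mul]
  congr 1
  rw [Finset.sum_filter]
  have h5 : ∀ u : Fin (kk+1),
      (if childCount (kk+1) q u ≤ 1 then 2 - childCount (kk+1) q u else 0)
        = 2 - childCount (kk+1) q u := by
    intro u
    by_cases h : childCount (kk+1) q u ≤ 1
    · rw [if_pos h]
    · rw [if_neg h]; omega
  rw [Finset.sum_congr rfl fun u _ => h5 u, sum_two_sub_cc hqa]


/-! ### base case -/

lemma mm_one (p : Fin 1 → Fin 1) (v : Fin 1) : mm 1 p v = 0 := by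
  have h : internalsA 1 p = ∅ := by
    unfold internalsA
    rw [Finset.filter_eq_empty_iff]
    intro x _
    have h1 : hookA 1 p x ≤ 1 := by
      refine le_trans (Finset.card_filter_le _ _) ?_
      simp
    omega
  unfold mm
  rw [h, Finset.filter_empty, Finset.card_empty]

lemma base : ∑ x ∈ pointedAndreTrees 1, 2 ^ mm 1 x.1 x.2 = 1 := by
  have hall : pointedAndreTrees 1 = {((fun i => i : Fin 1 → Fin 1), (0 : Fin 1))} := by
    apply Finset.eq_singleton_iff_unique_mem.mpr
    constructor
    · rw [mem_pAT]
      refine ⟨⟨?_, ?_, ?_⟩, ?_⟩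
      · intro i hi
        exact absurd hi (by omega)
      · intro i _
        rfl
      · intro j
        refine le_trans (Finset.card_filter_le _ _) ?_
        simp
      · refine le_trans (Finset.card_filter_le _ _) ?_
        simp
    · intro y _
      have h1 : y.1 = (fun i => i) := by
        funext i
        exact (Fin.fin_one_eq_zero _).trans (Fin.fin_one_eq_zero i).symm
      have h2 : y.2 = 0 := Fin.fin_one_eq_zero _
      calc y = (y.1, y.2) := rfl
        _ = _ := by rw [h1, h2]
  rw [hall, Finset.sum_singleton, mm_one, pow_zero]

end S11
end

/-- `n! = Σ_{(T,v*) ∈ 𝒜*_n} 2^{m(T,v*)}`, where `m(T,v*)` is the number of internal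
vertices of `T` not lying on the path from the root to the distinguished vertex,
the sum being over all pointed André trees on `n` vertices. -/
theorem stmt11 (n : ℕ) (hn : 1 ≤ n) :
    n.factorial
      = ∑ x ∈ pointedAndreTrees n,
          2 ^ ((internalsA n x.1).filter fun v => ¬ OnPath n x.1 x.2 v).card := by
  obtain ⟨m, rfl⟩ : ∃ m, n = m + 1 := ⟨n - 1, by omega⟩
  clear hn
  show (m+1).factorial = ∑ x ∈ pointedAndreTrees (m+1), 2 ^ S11.mm (m+1) x.1 x.2
  induction m with
  | zero => rw [S11.base]; rfl
  | succ k ih =>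
    show (k+2).factorial = ∑ x ∈ pointedAndreTrees (k+2), 2 ^ S11.mm (k+2) x.1 x.2
    rw [S11.step k, ← ih]
    rw [show (k+2).factorial = (k+2) * (k+1).factorial from rfl]
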